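/- For every positive integer n, n + (n/2)·(sum over k from 1 to n-1 of 1/sin²(kπ/(2n))) + n·(sum over k from 1 to n-1 of 1/(1 + 2·sin²(kπ/(2n)))) = n³/3 - (n²/√3)·(1 - 2/(1 - (2 - √3)^(2n))). -/

import Mathlib

open Polynomial Polynomial.Chebyshev Real

private lemma sinsqh (x:ℝ) : Real.sin (x/2)^2 = (1 - Real.cos x)/2 := by
  rw [Real.sin_sq, Real.cos_sq, show 2*(x/2) = x by ring]; ring

private lemma U_cast (m : ℕ) : ((m:ℤ) + 2) = ((m+2 : ℕ) : ℤ) := by push_cast; ring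

private lemma Udeg : ∀ m : ℕ, (U ℝ (m:ℤ)).natDegree ≤ m ∧ (U ℝ (m:ℤ)).coeff m = 2^m
  | 0 => by simp [U_zero]
  | 1 => by
      constructor
      · simpa [U_one] using natDegree_mul_le.trans (by simp [natDegree_X])
      · simp [U_one, coeff_X]
  | (m+2) => by
      have ih0 := Udeg m
      have ih1 := Udeg (m+1)
      have h2 : U ℝ ((m+2 : ℕ) : ℤ) = 2 * X * U ℝ ((m+1:ℕ):ℤ) - U ℝ (m:ℤ) := by
        push_cast
        exact U_add_two ℝ m
      constructor
      · rw [h2]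
        refine (natDegree_sub_le _ _).trans (sup_le ?_ (ih0.1.trans (by omega)))
        refine natDegree_mul_le.trans ?_
        have : (2 * X : ℝ[X]).natDegree ≤ 1 := natDegree_mul_le.trans (by simp [natDegree_X])
        omega
      · rw [h2, coeff_sub, coeff_eq_zero_of_natDegree_lt (lt_of_le_of_lt ih0.1 (by omega)),
          sub_zero, show (2 * X * U ℝ ((m+1:ℕ):ℤ)) = Polynomial.C 2 * (X * U ℝ ((m+1:ℕ):ℤ)) by
            rw [(map_ofNat Polynomial.C 2).symm, mul_assoc], coeff_C_mul, coeff_X_mul, ih1.2]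
        ring


private lemma Ustep (m : ℕ) : U ℝ ((m+2 : ℕ) : ℤ) = 2 * X * U ℝ ((m+1:ℕ):ℤ) - U ℝ (m:ℤ) := by
  push_cast; exact U_add_two ℝ m

private lemma evalU_one : ∀ m : ℕ, (U ℝ (m:ℤ)).eval 1 = m + 1
  | 0 => by simp [U_zero]
  | 1 => by norm_num [U_one]
  | (m+2) => by
      rw [Ustep m]
      simp only [eval_sub, eval_mul, eval_X, eval_ofNat, evalU_one m, evalU_one (m+1)]
      push_cast; ring

private lemma evalDU_one : ∀ m : ℕ,
    (Polynomial.derivative (U ℝ (m:ℤ))).eval 1 * 3 = m*(m+1)*(m+2)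
  | 0 => by simp [U_zero]
  | 1 => by norm_num [U_one, derivative_mul]
  | (m+2) => by
      have ih0 := evalDU_one m
      have ih1 := evalDU_one (m+1)
      have e1 := evalU_one (m+1)
      rw [Ustep m]
      simp only [derivative_sub, derivative_mul, derivative_X, derivative_ofNat, eval_sub,
        eval_add, eval_mul, eval_X, eval_ofNat, eval_one, eval_zero]
      push_cast at ih0 ih1 e1 ⊢
      linear_combination 2*ih1 - ih0 + 6*e1

private lemma evalU_two (q r : ℝ) (hq : q^2 = 4*q - 1) (hr : r^2 = 4*r - 1) (hs : q + r = 4) :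
    ∀ m : ℕ, (U ℝ (m:ℤ)).eval 2 * (q - r) = q^(m+1) - r^(m+1)
  | 0 => by simp [U_zero]
  | 1 => by
      norm_num [U_one]
      linear_combination hr - hq
  | (m+2) => by
      have ih0 := evalU_two q r hq hr hs m
      have ih1 := evalU_two q r hq hr hs (m+1)
      rw [Ustep m]
      simp only [eval_sub, eval_mul, eval_X, eval_ofNat]
      push_cast at ih0 ih1 ⊢
      linear_combination 4*ih1 - ih0 - q^(m+1)*hq + r^(m+1)*hr

private lemma evalDU_two (q r : ℝ) (hq : q^2 = 4*q - 1) (hr : r^2 = 4*r - 1) (hs : q + r = 4) :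
    ∀ m : ℕ, (Polynomial.derivative (U ℝ (m:ℤ))).eval 2 * (6*(q-r)) =
      ((m:ℝ)+1)*(q^(m+1)+r^(m+1))*(q-r) - 4*(q^(m+1) - r^(m+1))
  | 0 => by
      simp only [Nat.cast_zero, U_zero]
      simp
      linear_combination hr - hq
  | 1 => by
      norm_num [U_one, derivative_mul]
      linear_combination (-2*q + 2*r - 4)*hq + (2*r - 2*q + 4)*hr
  | (m+2) => by
      have ih0 := evalDU_two q r hq hr hs m
      have ih1 := evalDU_two q r hq hr hs (m+1)
      have e0 := evalU_two q r hq hr hs (m+1)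
      rw [Ustep m]
      simp only [derivative_sub, derivative_mul, derivative_X, derivative_ofNat, eval_sub,
        eval_add, eval_mul, eval_X, eval_ofNat, eval_one, eval_zero]
      push_cast at ih0 ih1 e0 ⊢
      linear_combination 12*e0 + 4*ih1 - ih0 - (((m:ℝ)+3)*(q-r)+4)*q^(m+1)*hq
        - (((m:ℝ)+3)*(q-r)-4)*r^(m+1)*hr + (q^(m+1)*(4*q-2) + r^(m+1)*(2-4*r))*hs


private lemma Uroot (n : ℕ) (hn : 0 < n) (k : ℕ) (hk : k ∈ Finset.Ico 1 n) :
    (U ℝ ((n-1 : ℕ):ℤ)).eval (Real.cos ((k:ℝ)*π/n)) = 0 := by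
  rw [Finset.mem_Ico] at hk
  have hn' : (0:ℝ) < n := by exact_mod_cast hn
  have hθ1 : 0 < (k:ℝ)*π/n := by
    apply div_pos (mul_pos (by exact_mod_cast hk.1) Real.pi_pos) hn'
  have hθ2 : (k:ℝ)*π/n < π := by
    rw [div_lt_iff₀ hn']
    have : (k:ℝ) < n := by exact_mod_cast hk.2
    nlinarith [Real.pi_pos]
  have hs : Real.sin ((k:ℝ)*π/n) ≠ 0 := ne_of_gt (Real.sin_pos_of_pos_of_lt_pi hθ1 hθ2)
  have h := U_real_cos ((k:ℝ)*π/n) ((n-1:ℕ):ℤ)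
  have hcast : (((n-1:ℕ):ℤ):ℝ) + 1 = (n:ℝ) := by
    push_cast [Nat.cast_sub hn]; ring
  rw [hcast] at h
  have : (n:ℝ) * ((k:ℝ)*π/n) = (k:ℝ)*π := by field_simp
  rw [this, Real.sin_nat_mul_pi] at h
  exact (mul_eq_zero.mp h).resolve_right hs

private lemma cos_injOn (n : ℕ) (hn : 0 < n) :
    Set.InjOn (fun k : ℕ => Real.cos ((k:ℝ)*π/n)) (Finset.Ico 1 n) := by
  intro a ha b hb hab
  simp only [Finset.coe_Ico, Set.mem_Ico] at ha hb
  have hn' : (0:ℝ) < n := by exact_mod_cast hn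
  have key : ∀ c : ℕ, 1 ≤ c → c < n → (c:ℝ)*π/n ∈ Set.Icc 0 π := by
    intro c h1 h2
    constructor
    · positivity
    · rw [div_le_iff₀ hn']
      have : (c:ℝ) ≤ n := by exact_mod_cast h2.le
      nlinarith [Real.pi_pos]
  have h2 := Real.injOn_cos (key a ha.1 ha.2) (key b hb.1 hb.2) hab
  have hπ := Real.pi_ne_zero
  rw [div_left_inj' hn'.ne', mul_left_inj' hπ] at h2
  exact_mod_cast h2

private lemma U_eq_nodal (n : ℕ) (hn : 0 < n) :
    U ℝ ((n-1 : ℕ):ℤ) = Polynomial.C ((2:ℝ)^(n-1)) *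
      Lagrange.nodal (Finset.Ico 1 n) (fun k : ℕ => Real.cos ((k:ℝ)*π/n)) := by
  rcases Nat.lt_or_ge n 2 with h2 | h2
  · have h1 : n = 1 := by omega
    subst h1
    simp [Lagrange.nodal, U_zero]
  set v : ℕ → ℝ := fun k : ℕ => Real.cos ((k:ℝ)*π/n) with hv
  set P := Lagrange.nodal (Finset.Ico 1 n) v with hP
  have hcard : (Finset.Ico 1 n).card = n - 1 := by rw [Nat.card_Ico]
  have hPdeg : P.natDegree = n - 1 := by
    rw [hP, Lagrange.natDegree_nodal, hcard]
  have hPmonic : P.Monic := Lagrange.nodal_monic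
  set D := U ℝ ((n-1 : ℕ):ℤ) - Polynomial.C ((2:ℝ)^(n-1)) * P with hD
  have hcoeff : D.coeff (n-1) = 0 := by
    rw [hD, coeff_sub, (Udeg (n-1)).2, coeff_C_mul, ← hPdeg, hPmonic.coeff_natDegree]
    ring
  have hdegle : D.natDegree ≤ n - 1 := by
    refine (natDegree_sub_le _ _).trans (sup_le (Udeg (n-1)).1 ?_)
    exact (natDegree_C_mul_le _ _).trans_eq hPdeg
  have hdeg : D.natDegree < n - 1 ∨ D = 0 := by
    rcases eq_or_ne D 0 with h | h
    · exact Or.inr h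
    · left
      rcases lt_or_eq_of_le hdegle with h' | h'
      · exact h'
      · exfalso
        apply leadingCoeff_ne_zero.mpr h
        rw [leadingCoeff, h']
        exact hcoeff
  have hzero : D = 0 := by
    rcases hdeg with h | h
    · apply Polynomial.eq_zero_of_natDegree_lt_card_of_eval_eq_zero' D
        ((Finset.Ico 1 n).image v)
      · intro y hy
        rw [Finset.mem_image] at hy
        obtain ⟨k, hk, rfl⟩ := hy
        rw [hD, eval_sub, Uroot n hn k hk, eval_mul]
        have : P.eval (v k) = 0 := Lagrange.eval_nodal_at_node hk
        rw [this]; ring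
      · rwa [Finset.card_image_of_injOn (cos_injOn n hn), hcard]
    · exact h
  exact sub_eq_zero.mp hzero


private lemma sum_inv_eq (n : ℕ) (hn : 0 < n) (x : ℝ)
    (hx : ∀ k ∈ Finset.Ico 1 n, x ≠ Real.cos ((k:ℝ)*π/n)) :
    ∑ k ∈ Finset.Ico 1 n, 1/(x - Real.cos ((k:ℝ)*π/n))
      = (Polynomial.derivative (U ℝ ((n-1:ℕ):ℤ))).eval x / (U ℝ ((n-1:ℕ):ℤ)).eval x := by
  classical
  set v : ℕ → ℝ := fun k : ℕ => Real.cos ((k:ℝ)*π/n) with hv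
  set s := Finset.Ico 1 n with hs
  have hc : (2:ℝ)^(n-1) ≠ 0 := by positivity
  rw [U_eq_nodal n hn, derivative_C_mul, eval_mul, eval_mul, eval_C,
    mul_div_mul_left _ _ hc, Lagrange.derivative_nodal, eval_finset_sum, Finset.sum_div]
  apply Finset.sum_congr rfl
  intro i hi
  have h1 : x - v i ≠ 0 := sub_ne_zero.mpr (hx i hi)
  have hE : (∏ j ∈ s.erase i, (x - v j)) ≠ 0 :=
    Finset.prod_ne_zero_iff.mpr fun j hj => sub_ne_zero.mpr (hx j (Finset.mem_of_mem_erase hj))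
  rw [Lagrange.eval_nodal, Lagrange.eval_nodal, ← Finset.mul_prod_erase s _ hi, one_div,
    mul_comm (x - v i), div_mul_eq_div_div, div_self hE, one_div]

set_option maxHeartbeats 1000000 in
theorem eigenvalue_sum_kirchhoff (n : ℕ) (hn : 0 < n) :
    (n : ℝ) + ((n : ℝ) / 2) * ∑ k ∈ Finset.Ico 1 n, 1 / Real.sin ((k : ℝ) * π / (2 * n)) ^ 2
        + (n : ℝ) * ∑ k ∈ Finset.Ico 1 n, 1 / (1 + 2 * Real.sin ((k : ℝ) * π / (2 * n)) ^ 2)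
      = (n : ℝ) ^ 3 / 3 - ((n : ℝ) ^ 2 / Real.sqrt 3) *
          (1 - 2 / (1 - (2 - Real.sqrt 3) ^ (2 * n))) := by
  have hn' : (0:ℝ) < n := by exact_mod_cast hn
  set s3 := Real.sqrt 3 with hs3def
  have hs3 : s3^2 = 3 := Real.sq_sqrt (by norm_num)
  have hs3pos : 0 < s3 := Real.sqrt_pos.mpr (by norm_num)
  have hs3lt : s3 < 2 := by nlinarith
  have hs3gt : 1 < s3 := by nlinarith
  set q : ℝ := 2 + s3 with hqdef
  set r : ℝ := 2 - s3 with hrdef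
  have hq : q^2 = 4*q - 1 := by rw [hqdef]; linear_combination hs3
  have hr : r^2 = 4*r - 1 := by rw [hrdef]; linear_combination hs3
  have hsum : q + r = 4 := by rw [hqdef, hrdef]; ring
  have hr0 : 0 < r := by rw [hrdef]; linarith
  have hrq : r < q := by rw [hqdef, hrdef]; linarith
  set Q := q^n with hQdef
  set R := r^n with hRdef
  have hqr1 : q * r = 1 := by rw [hqdef, hrdef]; linear_combination -hs3
  have hQR : Q * R = 1 := by rw [hQdef, hRdef, ← mul_pow, hqr1, one_pow]
  have hR0 : 0 < R := pow_pos hr0 n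
  have hRQ : R < Q := pow_lt_pow_left₀ hrq hr0.le hn.ne'
  have hR1 : R < 1 := by nlinarith
  have hQmR : Q - R ≠ 0 := (sub_pos.mpr hRQ).ne'
  have h1R2 : (1:ℝ) - R^2 ≠ 0 := by nlinarith
  have hm : n - 1 + 1 = n := Nat.succ_pred_eq_of_pos hn
  have hcn : ((n-1:ℕ):ℝ) = (n:ℝ) - 1 := by
    rw [Nat.cast_sub hn]; simp
  -- Chebyshev values
  have e1 : (U ℝ ((n-1:ℕ):ℤ)).eval 1 = n := by
    rw [evalU_one (n-1), hcn]; ring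
  have d1 : (Polynomial.derivative (U ℝ ((n-1:ℕ):ℤ))).eval 1 * 3 = ((n:ℝ)-1)*n*(n+1) := by
    rw [evalDU_one (n-1), hcn]; ring
  have e2 : (U ℝ ((n-1:ℕ):ℤ)).eval 2 * (q - r) = Q - R := by
    have h := evalU_two q r hq hr hsum (n-1)
    rwa [hm] at h
  have d2 : (Polynomial.derivative (U ℝ ((n-1:ℕ):ℤ))).eval 2 * (6*(q-r)) =
      (n:ℝ)*(Q+R)*(q-r) - 4*(Q-R) := by
    have h := evalDU_two q r hq hr hsum (n-1)
    rw [hm, hcn] at h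
    rw [h]; ring
  have hqmr : q - r = 2*s3 := by rw [hqdef, hrdef]; ring
  have he2 : (U ℝ ((n-1:ℕ):ℤ)).eval 2 = (Q - R)/(2*s3) := by
    rw [hqmr] at e2
    rw [eq_div_iff (by positivity : (2*s3) ≠ 0)]
    exact e2
  have hd2 : (Polynomial.derivative (U ℝ ((n-1:ℕ):ℤ))).eval 2 =
      ((n:ℝ)*(Q+R)*(2*s3) - 4*(Q-R))/(12*s3) := by
    rw [hqmr] at d2
    rw [eq_div_iff (by positivity : (12*s3) ≠ 0)]
    linear_combination d2
  have hd1 : (Polynomial.derivative (U ℝ ((n-1:ℕ):ℤ))).eval 1 = ((n:ℝ)-1)*n*(n+1)/3 := by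
    linarith [d1]
  -- cosine bounds
  have hcoslt : ∀ k ∈ Finset.Ico 1 n, Real.cos ((k:ℝ)*π/n) < 1 := by
    intro k hk
    rw [Finset.mem_Ico] at hk
    have hθ1 : 0 < (k:ℝ)*π/n := by
      apply div_pos (mul_pos (by exact_mod_cast hk.1) Real.pi_pos) hn'
    have hθ2 : (k:ℝ)*π/n ≤ π := by
      rw [div_le_iff₀ hn']
      have : (k:ℝ) ≤ n := by exact_mod_cast hk.2.le
      nlinarith [Real.pi_pos]
    calc Real.cos ((k:ℝ)*π/n) < Real.cos 0 := by
          apply Real.strictAntiOn_cos ⟨le_refl 0, Real.pi_pos.le⟩ ⟨hθ1.le, hθ2⟩ hθ1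
      _ = 1 := Real.cos_zero
  have hx1 : ∀ k ∈ Finset.Ico 1 n, (1:ℝ) ≠ Real.cos ((k:ℝ)*π/n) :=
    fun k hk => (hcoslt k hk).ne'
  have hx2 : ∀ k ∈ Finset.Ico 1 n, (2:ℝ) ≠ Real.cos ((k:ℝ)*π/n) :=
    fun k hk => (by linarith [hcoslt k hk] : Real.cos ((k:ℝ)*π/n) < 2).ne'
  -- rewrite sums
  have hsum1 : ∑ k ∈ Finset.Ico 1 n, 1 / Real.sin ((k : ℝ) * π / (2 * n)) ^ 2
      = 2 * ∑ k ∈ Finset.Ico 1 n, 1/((1:ℝ) - Real.cos ((k:ℝ)*π/n)) := by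
    rw [Finset.mul_sum]
    apply Finset.sum_congr rfl
    intro k hk
    have hx : (k:ℝ)*π/(2*n) = ((k:ℝ)*π/n)/2 := by ring
    rw [hx, sinsqh, one_div_div]
    rw [mul_one_div]
  have hsum2 : ∑ k ∈ Finset.Ico 1 n, 1 / (1 + 2 * Real.sin ((k : ℝ) * π / (2 * n)) ^ 2)
      = ∑ k ∈ Finset.Ico 1 n, 1/((2:ℝ) - Real.cos ((k:ℝ)*π/n)) := by
    apply Finset.sum_congr rfl
    intro k hk
    have hx : (k:ℝ)*π/(2*n) = ((k:ℝ)*π/n)/2 := by ring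
    rw [hx, sinsqh]
    ring_nf
  rw [hsum1, hsum2, sum_inv_eq n hn 1 hx1, sum_inv_eq n hn 2 hx2]
  rw [hd1, e1, hd2, he2]
  -- final arithmetic
  have hRpow : (2 - Real.sqrt 3) ^ (2 * n) = R^2 := by
    rw [← hs3def, ← hrdef, hRdef, ← pow_mul, mul_comm 2 n, pow_mul]
  rw [hRpow]
  clear_value R Q r q s3
  have h1mR : (1:ℝ) - R^2 = R*(Q-R) := by linear_combination -hQR
  have key : (1:ℝ) - 2/(1-R^2) = -((Q+R)/(Q-R)) := by
    rw [h1mR]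
    field_simp
    linear_combination 2*hQR
  rw [key]
  have hn0 : (n:ℝ) ≠ 0 := hn'.ne'
  field_simp
  linear_combination (12*(n:ℝ)*(Q+R))*hs3
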